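/- Let G be a finite simple graph on Fin n, let d ≥ 1, and let Π : Fin n → Matrix (Fin d) (Fin d) ℂ be a family of orthogonal projections realizing G (Π j * Π k = 0 whenever j and k are adjacent). Then for every clique K of G (a set of pairwise adjacent vertices) and every density matrix ρ on ℂ^d, ∑_{k ∈ K} Re(tr(Π_k * ρ)) ≤ 1. (The quantum probability vector satisfies all clique constraints, i.e., lies in QSTAB(G).) -/

import Mathlib

open Matrix
open scoped ComplexOrder

/-- A finset of vertices is independent: no two of its vertices are adjacent. -/
def IsIndep {n : ℕ} (G : SimpleGraph (Fin n)) (s : Finset (Fin n)) : Prop :=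
  ∀ v ∈ s, ∀ u ∈ s, ¬ G.Adj v u

/-- Incidence vector of a finset of vertices. -/
def incVec {n : ℕ} (s : Finset (Fin n)) : Fin n → ℝ := fun v => if v ∈ s then 1 else 0

/-- STAB(G): the convex hull of the incidence vectors of the independent sets of `G`. -/
def STAB {n : ℕ} (G : SimpleGraph (Fin n)) : Set (Fin n → ℝ) :=
  convexHull ℝ {x | ∃ s : Finset (Fin n), IsIndep G s ∧ x = incVec s}

/-- A fractional coloring of `G`: nonnegative weights supported on independent sets,
covering every vertex with total weight at least 1. -/
def IsFracColoring {n : ℕ} (G : SimpleGraph (Fin n)) (w : Finset (Fin n) → ℝ) : Prop :=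
  (∀ s, 0 ≤ w s) ∧ (∀ s, w s ≠ 0 → IsIndep G s) ∧
    (∀ v : Fin n, 1 ≤ ∑ s : Finset (Fin n), if v ∈ s then w s else 0)

/-- Total weight of a weight assignment on independent sets. -/
def totalWeight {n : ℕ} (w : Finset (Fin n) → ℝ) : ℝ := ∑ s : Finset (Fin n), w s

/-- `P` is an orthogonal projection of rank `r`: Hermitian, idempotent, of rank `r`. -/
def IsProjOfRank {d : ℕ} (r : ℕ) (P : Matrix (Fin d) (Fin d) ℂ) : Prop :=
  P.IsHermitian ∧ P * P = P ∧ P.rank = r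

/-- A family of projectors realizes the orthogonality graph `G`:
adjacent vertices carry orthogonal projectors. -/
def Realizes {n d : ℕ} (G : SimpleGraph (Fin n)) (P : Fin n → Matrix (Fin d) (Fin d) ℂ) : Prop :=
  ∀ j k, G.Adj j k → P j * P k = 0

lemma trace_nonneg' {d : ℕ} {M : Matrix (Fin d) (Fin d) ℂ} (h : M.PosSemidef) :
    0 ≤ M.trace := by
  rw [Matrix.trace]
  refine Finset.sum_nonneg fun i _ => ?_
  exact h.diag_nonneg

lemma trace_mul_nonneg' {d : ℕ} {A ρ : Matrix (Fin d) (Fin d) ℂ}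
    (hA : A.PosSemidef) (hρ : ρ.PosSemidef) : 0 ≤ (A * ρ).trace := by
  obtain ⟨B, hB⟩ : ∃ B : Matrix (Fin d) (Fin d) ℂ, ρ = Bᴴ * B := by
    open scoped MatrixOrder in exact CStarAlgebra.nonneg_iff_eq_star_mul_self.mp hρ.nonneg
  have : (A * ρ).trace = (B * A * Bᴴ).trace := by
    rw [hB, ← Matrix.mul_assoc, Matrix.trace_mul_cycle, Matrix.mul_assoc]
  rw [this]
  obtain ⟨C, hC⟩ : ∃ C : Matrix (Fin d) (Fin d) ℂ, A = Cᴴ * C := by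
    open scoped MatrixOrder in exact CStarAlgebra.nonneg_iff_eq_star_mul_self.mp hA.nonneg
  apply trace_nonneg'
  rw [hC]
  have : B * (Cᴴ * C) * Bᴴ = (C * Bᴴ)ᴴ * (C * Bᴴ) := by
    simp [Matrix.conjTranspose_mul, Matrix.mul_assoc]
  rw [this]
  exact Matrix.posSemidef_conjTranspose_mul_self _

theorem stmt11 {n d : ℕ} (G : SimpleGraph (Fin n)) (hd : 1 ≤ d)
    (P : Fin n → Matrix (Fin d) (Fin d) ℂ)
    (hP : ∀ k, (P k).IsHermitian ∧ P k * P k = P k) (hreal : Realizes G P) :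
    ∀ K : Finset (Fin n), G.IsClique (K : Set (Fin n)) →
      ∀ ρ : Matrix (Fin d) (Fin d) ℂ, ρ.PosSemidef → ρ.trace = 1 →
        ∑ k ∈ K, ((P k * ρ).trace).re ≤ 1 := by
  intro K hK ρ hρ hρ1
  set Q : Matrix (Fin d) (Fin d) ℂ := ∑ k ∈ K, P k with hQ
  have hQherm : Q.IsHermitian := by
    rw [hQ, Matrix.IsHermitian, Matrix.conjTranspose_sum]
    exact Finset.sum_congr rfl fun k _ => (hP k).1
  have hQidem : Q * Q = Q := by
    rw [hQ, Finset.sum_mul_sum]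
    have : ∀ j ∈ K, ∑ k ∈ K, P j * P k = P j := by
      intro j hj
      rw [Finset.sum_eq_single j (fun k hk hne => hreal j k (hK hj hk (Ne.symm hne)))
        (fun h => absurd hj h)]
      exact (hP j).2
    exact Finset.sum_congr rfl this
  have h1Q : (1 - Q).PosSemidef := by
    have hherm : (1 - Q).IsHermitian := by
      rw [Matrix.IsHermitian, Matrix.conjTranspose_sub, Matrix.conjTranspose_one, hQherm]
    have hidem : (1 - Q) * (1 - Q) = 1 - Q := by
      rw [mul_sub, sub_mul, sub_mul, hQidem]
      simp
    have : (1 - Q) = (1 - Q)ᴴ * (1 - Q) := by rw [hherm, hidem]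
    rw [this]
    exact Matrix.posSemidef_conjTranspose_mul_self _
  have htr : (0 : ℂ) ≤ ((1 - Q) * ρ).trace := trace_mul_nonneg' h1Q hρ
  have heq : ((1 - Q) * ρ).trace = 1 - (Q * ρ).trace := by
    rw [Matrix.sub_mul, Matrix.trace_sub, Matrix.one_mul, hρ1]
  rw [heq] at htr
  have hre : (Q * ρ).trace.re ≤ 1 := by
    have := (Complex.le_def.mp htr).1
    simp at this
    linarith
  have hsum : ∑ k ∈ K, ((P k * ρ).trace).re = (Q * ρ).trace.re := by
    rw [hQ, Finset.sum_mul, Matrix.trace_sum, Complex.re_sum]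
  linarith [hsum ▸ hre]
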